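/- Let X be a Hilbert space, M a normed space, b : X × M → ℝ a bounded bilinear form, X_h ⊆ X and M_h ⊆ M finite-dimensional subspaces such that b restricted to X_h × M_h satisfies the discrete inf-sup condition with constant β_h > 0. Then for every w ∈ X there exists a unique P̃_h w ∈ V_h^⊥ ∩ X_h (V_h the discrete kernel of b in X_h, orthogonal complement taken in X_h) with b(P̃_h w, μ) = b(w − Π_h w, μ) for all μ ∈ M_h, and ‖P̃_h w‖_X ≤ (‖b‖/β_h)·‖w − Π_h w‖_X, where Π_h is the orthogonal projection onto X_h. -/

import Mathlib

set_option maxHeartbeats 2000000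

open Metric in
/-- Under the discrete inf-sup condition for the bounded bilinear
form `b` on `X_h × M_h`, for every `w ∈ X` there exists a unique
`P̃_h w ∈ X_h`, orthogonal (within `X_h`) to the discrete kernel `V_h`, with
`b(P̃_h w, μ) = b(w − Π_h w, μ)` for all `μ ∈ M_h`, and
`‖P̃_h w‖ ≤ (‖b‖/β_h)·‖w − Π_h w‖`. -/
theorem exists_unique_discrete_infsup_correction
    {X M : Type*} [NormedAddCommGroup X] [InnerProductSpace ℝ X] [CompleteSpace X]
    [NormedAddCommGroup M] [NormedSpace ℝ M]
    (b : X →L[ℝ] M →L[ℝ] ℝ)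
    (Xh : Submodule ℝ X) (Mh : Submodule ℝ M)
    [FiniteDimensional ℝ Xh] [FiniteDimensional ℝ Mh]
    (βh : ℝ) (hβh : 0 < βh)
    (hinfsup : ∀ μ ∈ Mh, βh * ‖μ‖ ≤ sSup {r : ℝ | ∃ v ∈ Xh, v ≠ 0 ∧ r = b v μ / ‖v‖})
    (w : X) :
    ∃ p : X,
      (p ∈ Xh ∧
        (∀ v ∈ Xh, (∀ μ ∈ Mh, b v μ = 0) → inner (𝕜 := ℝ) p v = (0 : ℝ)) ∧
        (∀ μ ∈ Mh, b p μ = b (w - (Submodule.orthogonalProjectionOnto Xh w : X)) μ)) ∧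
      ‖p‖ ≤ (‖b‖ / βh) * ‖w - (Submodule.orthogonalProjectionOnto Xh w : X)‖ ∧
      ∀ q : X,
        (q ∈ Xh ∧
          (∀ v ∈ Xh, (∀ μ ∈ Mh, b v μ = 0) → inner (𝕜 := ℝ) q v = (0 : ℝ)) ∧
          (∀ μ ∈ Mh, b q μ = b (w - (Submodule.orthogonalProjectionOnto Xh w : X)) μ)) → q = p := by
  classical
  haveI : CompleteSpace Xh := FiniteDimensional.complete ℝ Xh
  set wr : X := w - (Submodule.orthogonalProjectionOnto Xh w : X) with hwr
  -- the functional `v ↦ b v μ` on `Xh`, linearly in `μ`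
  let F : Mh →ₗ[ℝ] (Xh →L[ℝ] ℝ) :=
    { toFun := fun μ => (b.flip μ.val).comp Xh.subtypeL
      map_add' := by intro μ ν; ext v; simp
      map_smul' := by intro c μ; ext v; simp }
  -- the Riesz representative
  let A : Mh →ₗ[ℝ] Xh :=
    { toFun := fun μ => (InnerProductSpace.toDual ℝ Xh).symm (F μ)
      map_add' := by intro μ ν; simp
      map_smul' := by intro c μ; simp }
  have hA : ∀ (μ : Mh) (v : Xh), (inner (𝕜 := ℝ) (A μ) v : ℝ) = b v.val μ.val := by
    intro μ v
    exact InnerProductSpace.toDual_symm_apply (𝕜 := ℝ) (E := Xh) (x := v) (y := F μ)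
  have hAlow : ∀ μ : Mh, βh * ‖μ‖ ≤ ‖A μ‖ := by
    intro μ
    refine le_trans (hinfsup μ.val μ.2) (Real.sSup_le ?_ (norm_nonneg _))
    rintro r ⟨v, hv, hv0, rfl⟩
    rw [div_le_iff₀ (norm_pos_iff.mpr hv0)]
    calc b v μ.val = (inner (𝕜 := ℝ) (A μ) (⟨v, hv⟩ : Xh) : ℝ) := (hA μ ⟨v, hv⟩).symm
      _ ≤ ‖A μ‖ * ‖(⟨v, hv⟩ : Xh)‖ := real_inner_le_norm _ _
      _ = ‖A μ‖ * ‖v‖ := rfl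
  -- the Gram-type map into the dual of Mh
  let T : Mh →ₗ[ℝ] Module.Dual ℝ Mh :=
    { toFun := fun ν =>
        { toFun := fun μ => (inner (𝕜 := ℝ) (A μ) (A ν) : ℝ)
          map_add' := by intro μ μ'; simp [inner_add_left]
          map_smul' := by intro c μ; simp [inner_smul_left] }
      map_add' := by intro ν ν'; ext μ; simp [inner_add_right]
      map_smul' := by intro c ν; ext μ; simp [inner_smul_right] }
  have Tinj : Function.Injective T := by
    rw [← LinearMap.ker_eq_bot, Submodule.eq_bot_iff]
    intro ν hν
    have h0 : (inner (𝕜 := ℝ) (A ν) (A ν) : ℝ) = 0 := by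
      have := congrFun (congrArg (fun f => f.toFun) hν) ν
      simpa [T] using this
    have hAν : A ν = 0 := by
      simpa using inner_self_eq_zero.mp h0
    have hn : βh * ‖ν‖ ≤ 0 := by simpa [hAν] using hAlow ν
    have : ‖ν‖ = 0 := le_antisymm (by nlinarith) (norm_nonneg _)
    exact norm_eq_zero.mp this
  have Tsurj : Function.Surjective T :=
    (LinearMap.injective_iff_surjective_of_finrank_eq_finrank
      (Subspace.dual_finrank_eq).symm).mp Tinj
  -- the right-hand side functional
  let g : Module.Dual ℝ Mh :=
    { toFun := fun μ => b wr μ.val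
      map_add' := by intro μ μ'; simp
      map_smul' := by intro c μ; simp }
  obtain ⟨ν, hν⟩ := Tsurj g
  have hkey : ∀ μ : Mh, (inner (𝕜 := ℝ) (A μ) (A ν) : ℝ) = b wr μ.val := by
    intro μ
    have := congrFun (congrArg (fun f => f.toFun) hν) μ
    simpa [T, g] using this
  set p : X := (A ν : X) with hp
  have hpXh : p ∈ Xh := (A ν).2
  have hporth : ∀ v ∈ Xh, (∀ μ ∈ Mh, b v μ = 0) → inner (𝕜 := ℝ) p v = (0 : ℝ) := by
    intro v hv hker
    calc (inner (𝕜 := ℝ) p v : ℝ)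
        = (inner (𝕜 := ℝ) (A ν) (⟨v, hv⟩ : Xh) : ℝ) := rfl
      _ = b v ν.val := hA ν ⟨v, hv⟩
      _ = 0 := hker ν.val ν.2
  have hpb : ∀ μ ∈ Mh, b p μ = b wr μ := by
    intro μ hμ
    calc b p μ = (inner (𝕜 := ℝ) (A ⟨μ, hμ⟩) (A ν) : ℝ) := (hA ⟨μ, hμ⟩ (A ν)).symm
      _ = b wr μ := hkey ⟨μ, hμ⟩
  have hpnorm : ‖p‖ ≤ (‖b‖ / βh) * ‖wr‖ := by
    have hb1 : (inner (𝕜 := ℝ) (A ν) (A ν) : ℝ) ≤ ‖b‖ * ‖wr‖ * ‖ν‖ := by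
      calc (inner (𝕜 := ℝ) (A ν) (A ν) : ℝ) = b wr ν.val := hkey ν
        _ ≤ ‖b wr ν.val‖ := le_abs_self _
        _ ≤ ‖b wr‖ * ‖ν.val‖ := (b wr).le_opNorm _
        _ ≤ (‖b‖ * ‖wr‖) * ‖ν.val‖ :=
            mul_le_mul_of_nonneg_right (b.le_opNorm _) (norm_nonneg _)
        _ = ‖b‖ * ‖wr‖ * ‖ν‖ := rfl
    have hν' : ‖ν‖ ≤ ‖A ν‖ / βh := by
      rw [le_div_iff₀ hβh]
      calc ‖ν‖ * βh = βh * ‖ν‖ := mul_comm _ _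
        _ ≤ ‖A ν‖ := hAlow ν
    have hsq : ‖A ν‖ * ‖A ν‖ ≤ (‖b‖ / βh * ‖wr‖) * ‖A ν‖ := by
      have h1 : ‖A ν‖ * ‖A ν‖ = (inner (𝕜 := ℝ) (A ν) (A ν) : ℝ) :=
        (real_inner_self_eq_norm_mul_norm _).symm
      have h2 : ‖b‖ * ‖wr‖ * ‖ν‖ ≤ ‖b‖ * ‖wr‖ * (‖A ν‖ / βh) :=
        mul_le_mul_of_nonneg_left hν' (by positivity)
      rw [h1]
      calc (inner (𝕜 := ℝ) (A ν) (A ν) : ℝ) ≤ ‖b‖ * ‖wr‖ * ‖ν‖ := hb1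
        _ ≤ ‖b‖ * ‖wr‖ * (‖A ν‖ / βh) := h2
        _ = (‖b‖ / βh * ‖wr‖) * ‖A ν‖ := by ring
    have hnorm : ‖p‖ = ‖A ν‖ := rfl
    rw [hnorm]
    rcases eq_or_lt_of_le (norm_nonneg (A ν)) with h0 | h0
    · rw [← h0]
      positivity
    · exact le_of_mul_le_mul_right hsq h0
  clear_value p
  clear hA hAlow hkey hν hp ν
  clear Tsurj Tinj g T A F
  refine ⟨p, ⟨hpXh, hporth, hpb⟩, hpnorm, ?_⟩
  rintro q ⟨hqXh, hqorth, hqb⟩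
  have hdXh : q - p ∈ Xh := Submodule.sub_mem _ hqXh hpXh
  have hdker : ∀ μ ∈ Mh, b (q - p) μ = 0 := by
    intro μ hμ
    have hsub : b (q - p) μ = b q μ - b p μ := by
      rw [map_sub, ContinuousLinearMap.sub_apply]
    rw [hsub, hqb μ hμ, hpb μ hμ]
    ring
  have h1 : (inner (𝕜 := ℝ) q (q - p) : ℝ) = 0 := hqorth _ hdXh hdker
  have h2 : (inner (𝕜 := ℝ) p (q - p) : ℝ) = 0 := hporth _ hdXh hdker
  have hdd : (inner (𝕜 := ℝ) (q - p) (q - p) : ℝ) = 0 := by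
    rw [inner_sub_left, h1, h2]
    ring
  have : q - p = 0 := inner_self_eq_zero.mp hdd
  rwa [sub_eq_zero] at this
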